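/- Let λ be a regular uncountable cardinal, S ⊆ {δ < λ⁺ : cf(δ) = λ}, and C̄ = ⟨C_δ : δ ∈ S⟩ a sequence where each C_δ is a club of δ of order type λ such that every α ∈ nacc(C_δ) has cofinality < λ. Then the forcing notion Q¹_{C̄} is (<λ)-complete: every ≤-increasing sequence of conditions of length < λ has an upper bound in Q¹_{C̄}. -/

import Mathlib

/-- `C` is a club of the limit ordinal `δ`: a subset of `δ`, unbounded in `δ`,
closed below `δ`. -/
def IsClubBelow (C : Set Ordinal.{0}) (δ : Ordinal.{0}) : Prop :=
  (∀ α ∈ C, α < δ) ∧ (∀ α < δ, ∃ β ∈ C, α ≤ β) ∧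
    ∀ B ⊆ C, B.Nonempty → sSup B < δ → sSup B ∈ C

/-- The non-accumulation points of a set `C` of ordinals:
`nacc C = C ∖ {α ∈ C : α = sup (C ∩ α)}`. -/
def nacc (C : Set Ordinal.{0}) : Set Ordinal.{0} :=
  {α ∈ C | sSup (C ∩ Set.Iio α) ≠ α}

/-- The order type of a set of ordinals. -/
noncomputable def otype (C : Set Ordinal.{0}) : Ordinal.{1} :=
  Ordinal.type (Subrel ((· < ·) : Ordinal.{0} → Ordinal.{0} → Prop) (· ∈ C))

/-- Conditions of the forcing notion `Q¹_{C̄}`: closed bounded subsets `e` of `λ⁺` such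
that for every `δ ∈ S` with `δ ≤ sup e`, the set `e ∩ nacc (C δ)` is bounded below `δ`. -/
def Q1Cond (lamPlus : Ordinal.{0}) (S : Set Ordinal.{0})
    (C : Ordinal.{0} → Set Ordinal.{0}) (e : Set Ordinal.{0}) : Prop :=
  (∀ α ∈ e, α < lamPlus) ∧ sSup e < lamPlus ∧
    (∀ B ⊆ e, B.Nonempty → sSup B ∈ e) ∧
    ∀ δ ∈ S, δ ≤ sSup e → ∃ γ < δ, ∀ α ∈ e ∩ nacc (C δ), α ≤ γ

/-- The order of `Q¹_{C̄}` is end extension: `e₀ ≤ e₁` iff `e₀ = e₁ ∩ (sup e₀ + 1)`. -/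
def Q1Le (e₀ e₁ : Set Ordinal.{0}) : Prop :=
  e₀ = e₁ ∩ Set.Iic (sSup e₀)

/-- For a regular uncountable `λ`, `S ⊆ {δ < λ⁺ : cf δ = λ}` and `C̄ = ⟨C_δ : δ ∈ S⟩`
with each `C_δ` a club of `δ` of order type `λ` all of whose non-accumulation points have
cofinality `< λ`, the forcing notion `Q¹_{C̄}` is `(<λ)`-complete: every `≤`-increasing
sequence of conditions of length `< λ` has an upper bound. -/
theorem stmt8 (lam : Cardinal.{0}) (hreg : lam.IsRegular) (hunc : Cardinal.aleph0 < lam)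
    (S : Set Ordinal.{0}) (hS : ∀ δ ∈ S, δ < (Order.succ lam).ord ∧ δ.cof = lam)
    (C : Ordinal.{0} → Set Ordinal.{0})
    (hC : ∀ δ ∈ S, IsClubBelow (C δ) δ ∧ otype (C δ) = Ordinal.lift.{1} lam.ord ∧
      ∀ α ∈ nacc (C δ), α.cof < lam)
    (δ₀ : Ordinal.{0}) (hδ₀ : δ₀ < lam.ord) (e : Ordinal.{0} → Set Ordinal.{0})
    (hcond : ∀ i < δ₀, Q1Cond (Order.succ lam).ord S C (e i))
    (hmono : ∀ i j : Ordinal.{0}, i ≤ j → j < δ₀ → Q1Le (e i) (e j)) :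
    ∃ e' : Set Ordinal.{0}, Q1Cond (Order.succ lam).ord S C e' ∧
      ∀ i < δ₀, Q1Le (e i) e' := by
  have h0 : sSup (∅ : Set Ordinal.{0}) = 0 := by
    rw [csSup_empty]; rfl
  have hlam0 : (0 : Cardinal) < lam := Cardinal.aleph0_pos.trans hunc
  set U : Set Ordinal.{0} := {α | ∃ i, ∃ _ : i < δ₀, α ∈ e i} with hUdef
  have hsub : ∀ i, i < δ₀ → e i ⊆ U := fun i hi α hα => ⟨i, hi, hα⟩
  rcases Set.eq_empty_or_nonempty U with hUe | hU
  · -- all conditions are empty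
    have hee : ∀ i, i < δ₀ → e i = ∅ := fun i hi =>
      Set.eq_empty_of_subset_empty (hUe ▸ hsub i hi)
    refine ⟨∅, ⟨by simp, ?_, by simp [Set.subset_empty_iff], ?_⟩, ?_⟩
    · rw [h0, ← Cardinal.ord_zero]
      exact Cardinal.ord_lt_ord.2 (lt_of_lt_of_le hlam0 (Order.le_succ lam))
    · intro δ hδ hδle
      rw [h0, nonpos_iff_eq_zero] at hδle
      subst hδle
      have := (hS 0 hδ).2
      rw [Ordinal.cof_zero] at this
      exact absurd this.symm (ne_of_gt hlam0)
    · intro i hi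
      rw [Q1Le, hee i hi]
      simp
  · -- the union is nonempty
    set σ : Ordinal.{0} := sSup U with hσdef
    have hltU : ∀ α ∈ U, α < (Order.succ lam).ord := by
      rintro α ⟨i, hi, hα⟩; exact (hcond i hi).1 α hα
    have bddU : BddAbove U := ⟨(Order.succ lam).ord, fun α hα => (hltU α hα).le⟩
    have hub : ∀ α ∈ U, α ≤ σ := fun α hα => le_csSup bddU hα
    have bddei : ∀ i, i < δ₀ → BddAbove (e i) := fun i hi => bddU.mono (hsub i hi)
    have hsupi_le : ∀ i, i < δ₀ → sSup (e i) ≤ σ := by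
      intro i hi
      rcases Set.eq_empty_or_nonempty (e i) with h | h
      · rw [h, h0]; exact zero_le (a := σ)
      · exact csSup_le_csSup bddU h (hsub i hi)
    -- key end-extension fact
    have key : ∀ i, i < δ₀ → ∀ α ∈ U, α ≤ sSup (e i) → α ∈ e i := by
      rintro i hi α ⟨j, hj, hα⟩ hle
      rcases le_total j i with h | h
      · have heq := hmono j i h hi
        rw [Q1Le] at heq
        rw [heq] at hα
        exact hα.1
      · have heq := hmono i j h hj
        rw [Q1Le] at heq
        rw [heq]
        exact ⟨hα, hle⟩
    have hσeq : σ = Ordinal.bsup δ₀ (fun i (_ : i < δ₀) => sSup (e i)) := by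
      apply le_antisymm
      · refine csSup_le hU ?_
        rintro α ⟨i, hi, hα⟩
        exact (le_csSup (bddei i hi) hα).trans (Ordinal.le_bsup _ i hi)
      · exact Ordinal.bsup_le fun i hi => hsupi_le i hi
    have hσlt : σ < (Order.succ lam).ord := by
      rw [hσeq]
      refine Cardinal.bsup_lt_ord_of_isRegular (Cardinal.isRegular_succ hreg.aleph0_le) ?_
        (fun i hi => (hcond i hi).2.1)
      exact (Cardinal.lt_ord.1 hδ₀).trans (Order.lt_succ lam)
    have hσin : ∀ B : Set Ordinal.{0}, B ⊆ insert σ U → BddAbove B := fun B hB =>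
      (bddU.insert σ).mono hB
    have hssup : sSup (insert σ U) = σ := by
      apply le_antisymm
      · refine csSup_le ⟨σ, Set.mem_insert σ U⟩ ?_
        rintro α (rfl | hα)
        · exact le_rfl
        · exact hub α hα
      · exact le_csSup (hσin _ le_rfl) (Set.mem_insert σ U)
    refine ⟨insert σ U, ⟨?_, ?_, ?_, ?_⟩, ?_⟩
    · rintro α (rfl | hα)
      · exact hσlt
      · exact hltU α hα
    · rw [hssup]; exact hσlt
    · -- closedness
      intro B hB hBne
      have hBbdd : BddAbove B := hσin B hB
      have hBle : sSup B ≤ σ := by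
        refine csSup_le hBne fun b hb => ?_
        rcases hB hb with rfl | hbU
        · exact le_rfl
        · exact hub b hbU
      rcases eq_or_lt_of_le hBle with hBσ | hBσ
      · rw [hBσ]; exact Set.mem_insert σ U
      · -- sSup B < σ: B ⊆ U and B ⊆ e i for some i
        have hBU : B ⊆ U := by
          intro b hb
          rcases hB hb with rfl | hbU
          · exact absurd (le_csSup hBbdd hb) (not_le.2 hBσ)
          · exact hbU
        rw [hσeq] at hBσ
        obtain ⟨i, hi, hlt⟩ := (Ordinal.lt_bsup _).1 hBσ
        have hBei : B ⊆ e i := fun b hb =>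
          key i hi b (hBU hb) ((le_csSup hBbdd hb).trans hlt.le)
        exact Set.mem_insert_of_mem σ
          (hsub i hi ((hcond i hi).2.2.1 B hBei hBne))
    · -- the nacc condition
      intro δ hδS hδle
      rw [hssup] at hδle
      by_cases hex : ∃ i, ∃ _ : i < δ₀, δ ≤ sSup (e i)
      · obtain ⟨i, hi, hde⟩ := hex
        obtain ⟨γ, hγδ, hγ⟩ := (hcond i hi).2.2.2 δ hδS hde
        refine ⟨γ, hγδ, ?_⟩
        rintro α ⟨hαe, hαn⟩
        have hαδ : α < δ := (hC δ hδS).1.1 α hαn.1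
        rcases hαe with rfl | hαU
        · exact absurd (hαδ.trans_le (hde.trans (hsupi_le i hi))) (lt_irrefl _)
        · exact hγ α ⟨key i hi α hαU (hαδ.le.trans hde), hαn⟩
      · -- impossible by cofinality
        exfalso
        push_neg at hex
        have hσδ : σ = δ := by
          apply le_antisymm _ hδle
          rw [hσeq]
          exact Ordinal.bsup_le fun i hi => (hex i hi).le
        have hcof : δ.cof ≤ δ₀.card := by
          rw [← hσδ, hσeq]
          exact Ordinal.cof_bsup_le fun i hi => by
            rw [← hσeq, hσδ]; exact hex i hi
        rw [(hS δ hδS).2] at hcof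
        exact absurd (hcof.trans_lt (Cardinal.lt_ord.1 hδ₀)) (lt_irrefl _)
    · -- end extension
      intro i hi
      rw [Q1Le]
      apply Set.eq_of_subset_of_subset
      · intro α hα
        exact ⟨Set.mem_insert_of_mem σ (hsub i hi hα), le_csSup (bddei i hi) hα⟩
      · rintro α ⟨hmem, hαle⟩
        rcases Set.mem_insert_iff.1 hmem with rfl | hαU
        · -- α = σ ≤ sSup (e i), so σ = sSup (e i) ∈ e i
          rcases Set.eq_empty_or_nonempty (e i) with hemp | hne
          · exfalso
            -- e i = ∅ forces σ = 0 and 0 ∈ U, contradicting end extension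
            rw [hemp, h0] at hαle
            have hσ0 : σ = 0 := nonpos_iff_eq_zero.1 hαle
            obtain ⟨β, hβ⟩ := hU
            have hβ0 : β = 0 := nonpos_iff_eq_zero.1 (hσ0 ▸ hub β hβ)
            obtain ⟨j, hj, hβe⟩ := hβ
            have : β ∈ e i := key i hi β ⟨j, hj, hβe⟩ (by rw [hβ0, hemp, h0])
            rw [hemp] at this
            exact this
          · have : σ = sSup (e i) := le_antisymm hαle (hsupi_le i hi)
            rw [this]
            exact (hcond i hi).2.2.1 (e i) le_rfl hne
        · exact key i hi α hαU hαle
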